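/- Let $f$ be homogeneous of degree $2m$ in $t_0,\ldots,t_n$, written $f = \sum_{k=0}^{2m} t_0^{2m-k} f_k(t_1,\ldots,t_n)$, and assume $f_0 = 1$ and $f_1 = \cdots = f_m = 0$. Define, for $y$ near $0$ in $\mathbb{C}^n$, $B_{m+1}^f(y;z) = \frac{a_{m+1}^f(y;z)}{a_0^f(y;z)} - A_{m+1}\!\left(\frac{a_1^f(y;z)}{a_0^f(y;z)},\ldots,\frac{a_m^f(y;z)}{a_0^f(y;z)}\right)$, where $a_k^f$ are the $\lambda$-expansion coefficients of $f(1,y+\lambda z)$ and $A_{m+1}$ is the weighted homogeneous polynomial of weighted degree $m+1$ characterizing ECO polynomials. Then $B_{m+1}^f(0;z) = f_{m+1}(z)$ and $\frac{\partial B_{m+1}^f}{\partial y_i}(0;z) = \frac{\partial f_{m+2}}{\partial t_i}(z)$ for all $i = 1,\ldots,n$. -/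

import Mathlib

open Polynomial Finset

lemma myChainRule {A : Type*} [CommRing A] [Algebra ℂ A] {N : ℕ}
    (g : Fin N → Polynomial A) (p : MvPolynomial (Fin N) ℂ) :
    Polynomial.derivative (MvPolynomial.aeval g p) =
      ∑ j, MvPolynomial.aeval g (MvPolynomial.pderiv j p) * Polynomial.derivative (g j) := by
  induction p using MvPolynomial.induction_on with
  | C c =>
      simp [MvPolynomial.aeval_C, MvPolynomial.pderiv_C, Polynomial.algebraMap_apply]
  | add p q hp hq =>
      simp [hp, hq, add_mul, Finset.sum_add_distrib]
  | mul_X p j hp =>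
      have key : ∀ x : Fin N,
          (MvPolynomial.aeval g) (Pi.single (M := fun _ => MvPolynomial (Fin N) ℂ) x 1 j)
            = if x = j then 1 else 0 := by
        intro x
        rcases eq_or_ne x j with rfl | h
        · simp
        · simp [Pi.single_eq_of_ne (Ne.symm h), h]
      simp only [map_mul, MvPolynomial.aeval_X, derivative_mul, hp, MvPolynomial.pderiv_mul,
        MvPolynomial.pderiv_X, map_add, Finset.sum_mul, add_mul, Finset.sum_add_distrib, key,
        mul_ite, ite_mul, mul_one, one_mul, mul_zero, zero_mul, Finset.sum_ite_eq',
        Finset.mem_univ, if_true]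
      refine congrArg (· + _) ?_
      exact Finset.sum_congr rfl fun j' _ => by ring

lemma myHasDerivAt {N : ℕ} (p : MvPolynomial (Fin N) ℂ) (g : Fin N → ℂ → ℂ) (g' : Fin N → ℂ)
    (x : ℂ) (hg : ∀ j, HasDerivAt (g j) (g' j) x) :
    HasDerivAt (fun s => MvPolynomial.eval (fun j => g j s) p)
      (∑ j, MvPolynomial.eval (fun j => g j x) (MvPolynomial.pderiv j p) * g' j) x := by
  induction p using MvPolynomial.induction_on with
  | C c =>
      simpa using hasDerivAt_const x c
  | add p q hp hq =>
      have := hp.fun_add hq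
      simpa [add_mul, Finset.sum_add_distrib] using this
  | mul_X p j hp =>
      have key : ∀ a : Fin N,
          MvPolynomial.eval (fun j => g j x)
              (Pi.single (M := fun _ => MvPolynomial (Fin N) ℂ) a 1 j)
            = if a = j then 1 else 0 := by
        intro a
        rcases eq_or_ne a j with rfl | h
        · simp
        · simp [Pi.single_eq_of_ne (Ne.symm h), h]
      have h2 := hp.fun_mul (hg j)
      have h3 : HasDerivAt (fun s => MvPolynomial.eval (fun j' => g j' s) (p * MvPolynomial.X j))
          ((∑ j', MvPolynomial.eval (fun j => g j x) (MvPolynomial.pderiv j' p) * g' j') * g j x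
            + MvPolynomial.eval (fun j => g j x) p * g' j) x := by
        simpa using h2
      convert h3 using 1
      simp only [MvPolynomial.pderiv_mul, MvPolynomial.pderiv_X, map_add, map_mul,
        MvPolynomial.eval_X, key, add_mul, Finset.sum_add_distrib, mul_ite, ite_mul,
        mul_one, one_mul, mul_zero, zero_mul, Finset.sum_ite_eq', Finset.mem_univ, if_true,
        Finset.sum_mul]
      congr 1
      exact Finset.sum_congr rfl fun j' _ => by ring

lemma myHomogEval {N d : ℕ} {p : MvPolynomial (Fin N) ℂ} (hp : p.IsHomogeneous d)
    (z : Fin N → ℂ) :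
    MvPolynomial.aeval (fun j => Polynomial.C (z j) * Polynomial.X) p
      = Polynomial.C (MvPolynomial.eval z p) * Polynomial.X ^ d := by
  conv_lhs => rw [p.as_sum]
  conv_rhs => rw [p.as_sum]
  rw [map_sum, map_sum, map_sum, Finset.sum_mul]
  refine Finset.sum_congr rfl fun v hv => ?_
  have hdeg : ∑ i ∈ v.support, v i = d := by
    have := hp (MvPolynomial.mem_support_iff.mp hv)
    change (Finsupp.weight (fun _ => 1)) v = d at this
    rw [← Finsupp.degree_eq_weight_one] at this
    exact this
  rw [MvPolynomial.aeval_monomial, MvPolynomial.eval_monomial]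
  have : (Finsupp.prod v fun i k => (Polynomial.C (z i) * Polynomial.X) ^ k)
      = Polynomial.C (Finsupp.prod v fun i k => z i ^ k) * Polynomial.X ^ d := by
    rw [Finsupp.prod, Finsupp.prod]
    rw [← hdeg]
    simp only [mul_pow]
    rw [Finset.prod_mul_distrib, Finset.prod_pow_eq_pow_sum, map_prod]
    simp
  rw [this]
  simp only [Polynomial.algebraMap_apply, map_mul]
  simp [mul_assoc]

lemma myEvalZeroWH {M : ℕ} {w : Fin M → ℕ} {q : MvPolynomial (Fin M) ℂ} {D : ℕ}
    (hq : q.IsWeightedHomogeneous w D) (hD : D ≠ 0) :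
    MvPolynomial.eval (0 : Fin M → ℂ) q = 0 := by
  have h1 : MvPolynomial.eval (0 : Fin M → ℂ) q = MvPolynomial.constantCoeff q := by
    rw [MvPolynomial.eval_zero]
  rw [h1, MvPolynomial.constantCoeff_eq]
  apply hq.coeff_eq_zero
  rw [map_zero]
  exact Ne.symm hD

lemma myPderivEvalZero {M : ℕ} {w : Fin M → ℕ} {q : MvPolynomial (Fin M) ℂ} {D : ℕ}
    (hq : q.IsWeightedHomogeneous w D) (hw : ∀ j, w j ≠ D) (j : Fin M) :
    MvPolynomial.eval (0 : Fin M → ℂ) (MvPolynomial.pderiv j q) = 0 := by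
  have h1 : ∀ r : MvPolynomial (Fin M) ℂ, MvPolynomial.eval (0 : Fin M → ℂ) r
      = MvPolynomial.coeff 0 r := by
    intro r; rw [MvPolynomial.eval_zero, MvPolynomial.constantCoeff_eq]
  rw [h1]
  conv_lhs => rw [q.as_sum]
  rw [map_sum, MvPolynomial.coeff_sum]
  refine Finset.sum_eq_zero fun v hv => ?_
  rw [MvPolynomial.pderiv_monomial, MvPolynomial.coeff_monomial]
  split_ifs with h
  · rcases Nat.eq_zero_or_pos (v j) with h0 | h0
    · simp [h0]
    · have hvj : v = Finsupp.single j 1 := by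
        ext i
        rcases eq_or_ne i j with rfl | hij
        · have := DFunLike.congr_fun h i
          simp only [Finsupp.tsub_apply, Finsupp.single_eq_same, Finsupp.coe_zero,
            Pi.zero_apply] at this
          simp only [Finsupp.single_eq_same]
          omega
        · have := DFunLike.congr_fun h i
          simp only [Finsupp.tsub_apply, Finsupp.single_eq_of_ne' (Ne.symm hij),
            Finsupp.coe_zero, Pi.zero_apply] at this
          simp only [Finsupp.single_eq_of_ne' (Ne.symm hij)]
          omega
      have hco : MvPolynomial.coeff v q = 0 := by
        apply hq.coeff_eq_zero
        rw [hvj]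
        have : (Finsupp.weight w) (Finsupp.single j 1) = w j := by
          rw [Finsupp.weight_apply, Finsupp.sum_single_index] <;> simp
        rw [this]
        exact hw j
      simp [hco]
  · rfl

lemma myHomogPderiv {N D : ℕ} {p : MvPolynomial (Fin N) ℂ} (hp : p.IsHomogeneous D)
    (x : Fin N) : (MvPolynomial.pderiv x p).IsHomogeneous (D - 1) := by
  intro d hd
  have hexp : MvPolynomial.coeff d (MvPolynomial.pderiv x p)
      = ∑ v ∈ p.support,
        (if v - Finsupp.single x 1 = d then MvPolynomial.coeff v p * v x else 0) := by
    conv_lhs => rw [p.as_sum, map_sum, MvPolynomial.coeff_sum]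
    refine Finset.sum_congr rfl fun v hv => ?_
    rw [MvPolynomial.pderiv_monomial, MvPolynomial.coeff_monomial]
  rw [hexp] at hd
  obtain ⟨v, hv, hvne⟩ := Finset.exists_ne_zero_of_sum_ne_zero hd
  split_ifs at hvne with heq
  · have hvx : v x ≠ 0 := by
      intro h0; rw [h0] at hvne; simp at hvne
    have hvd : v = d + Finsupp.single x 1 := by
      ext i
      have := DFunLike.congr_fun heq i
      rcases eq_or_ne i x with rfl | hix
      · simp only [Finsupp.tsub_apply, Finsupp.single_eq_same] at this
        simp only [Finsupp.add_apply, Finsupp.single_eq_same]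
        omega
      · simp only [Finsupp.tsub_apply, Finsupp.single_eq_of_ne' (Ne.symm hix)] at this
        simp only [Finsupp.add_apply, Finsupp.single_eq_of_ne' (Ne.symm hix)]
        omega
    have hcv : MvPolynomial.coeff v p ≠ 0 := fun h0 => hvne (by rw [h0]; ring)
    have hwv := hp hcv
    rw [hvd, map_add] at hwv
    have hws : (Finsupp.weight (1 : Fin N → ℕ)) (Finsupp.single x 1) = 1 := by
      rw [Finsupp.weight_apply, Finsupp.sum_single_index] <;> simp
    rw [hws] at hwv
    omega
  · exact absurd rfl hvne

lemma myCommEval {N : ℕ} (χ : Fin N → Polynomial (Polynomial ℂ)) (u : Polynomial ℂ)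
    (p : MvPolynomial (Fin N) ℂ) :
    Polynomial.eval u (MvPolynomial.aeval χ p)
      = MvPolynomial.aeval (fun j => Polynomial.eval u (χ j)) p := by
  induction p using MvPolynomial.induction_on with
  | C c => simp [MvPolynomial.aeval_C, Polynomial.algebraMap_apply]
  | add p q hp hq => simp [hp, hq]
  | mul_X p j hp => simp [hp]

lemma myU (Q : Polynomial (Polynomial ℂ)) (k : ℕ) :
    HasDerivAt (fun s : ℂ => (Q.eval (Polynomial.C s)).coeff k) ((Q.coeff 1).coeff k) 0 := by
  set M := Q.natDegree + 2 with hM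
  have hs : ∀ s : ℂ, (Q.eval (Polynomial.C s)).coeff k
      = ∑ e ∈ range M, (Q.coeff e).coeff k * s ^ e := by
    intro s
    rw [Polynomial.eval_eq_sum_range' (by omega : Q.natDegree < M), Polynomial.finset_sum_coeff]
    refine sum_congr rfl fun e _ => ?_
    rw [← Polynomial.C_pow, Polynomial.coeff_mul_C]
  have hd : HasDerivAt (fun s : ℂ => ∑ e ∈ range M, (Q.coeff e).coeff k * s ^ e)
      (∑ e ∈ range M, (Q.coeff e).coeff k * ((e : ℂ) * (0 : ℂ) ^ (e - 1))) 0 :=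
    HasDerivAt.fun_sum fun e _ => (hasDerivAt_pow e 0).const_mul _
  have hsum : (∑ e ∈ range M, (Q.coeff e).coeff k * ((e : ℂ) * (0 : ℂ) ^ (e - 1)))
      = (Q.coeff 1).coeff k := by
    rw [Finset.sum_eq_single_of_mem 1 (by simp [hM])]
    · simp
    · intro e _ he
      rcases Nat.eq_zero_or_pos e with rfl | h0
      · simp
      · have : e - 1 ≠ 0 := by omega
        simp [zero_pow this]
  rw [hsum] at hd
  exact hd.congr_deriv rfl |>.congr_of_eventuallyEq (Filter.Eventually.of_forall fun s => (hs s))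

/-- Let `f = ∑_k t_0^{2m-k} f_k(t_1,…,t_n)` with `f_0 = 1` and `f_1 = ⋯ = f_m = 0`, and
let `A = A_{m+1}` be the weighted homogeneous polynomial of weighted degree `m+1`
characterizing ECO polynomials (hypotheses `hA`, `hAeco`). With `a_k(y;z)` the
`λ`-expansion coefficients of `f(1, y+λz)` and
`B(y;z) = a_{m+1}/a_0 - A(a_1/a_0, …, a_m/a_0)`, one has `B(0;z) = f_{m+1}(z)` and
`∂B/∂y_i(0;z) = ∂f_{m+2}/∂t_i(z)` for all `i`. -/
theorem stmt18 (n m : ℕ) (hn : 1 ≤ n) (hm : 2 ≤ m)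
    (fk : ℕ → MvPolynomial (Fin n) ℂ)
    (hfk : ∀ k ≤ 2 * m, (fk k).IsHomogeneous k)
    (hf0 : fk 0 = 1)
    (hfv : ∀ k, 1 ≤ k → k ≤ m → fk k = 0)
    (A : MvPolynomial (Fin m) ℂ)
    (hA : A.IsWeightedHomogeneous (fun i : Fin m => i.1 + 1) (m + 1))
    (hAeco : ∀ a : ℕ → ℂ, a 0 = 1 →
      (∃ r : Polynomial ℂ, r.natDegree ≤ m ∧
        ∑ k ∈ Finset.range (2 * m + 1), Polynomial.C (a k) * Polynomial.X ^ k = r ^ 2) →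
      a (m + 1) = MvPolynomial.eval (fun i : Fin m => a (i.1 + 1)) A) :
    let f : MvPolynomial (Fin (n + 1)) ℂ :=
      ∑ k ∈ Finset.range (2 * m + 1),
        MvPolynomial.X 0 ^ (2 * m - k) * MvPolynomial.rename Fin.succ (fk k)
    let a : ℕ → (Fin n → ℂ) → (Fin n → ℂ) → ℂ := fun k y z =>
      (MvPolynomial.aeval (Fin.cons (1 : Polynomial ℂ)
        (fun j => Polynomial.C (y j) + Polynomial.C (z j) * Polynomial.X)) f).coeff k
    let B : (Fin n → ℂ) → (Fin n → ℂ) → ℂ := fun y z =>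
      a (m + 1) y z / a 0 y z -
        MvPolynomial.eval (fun j : Fin m => a (j.1 + 1) y z / a 0 y z) A
    (∀ z : Fin n → ℂ, B 0 z = MvPolynomial.eval z (fk (m + 1))) ∧
      ∀ (i : Fin n) (z : Fin n → ℂ),
        deriv (fun s : ℂ => B ((Pi.single i s : Fin n → ℂ)) z) 0 =
          MvPolynomial.eval z (MvPolynomial.pderiv i (fk (m + 2))) := by
  intro f a B
  have hkey : ∀ g : Fin n → Polynomial ℂ,
      MvPolynomial.aeval (Fin.cons (1 : Polynomial ℂ) g)
        (∑ k ∈ Finset.range (2*m+1),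
          MvPolynomial.X 0 ^ (2*m-k) * MvPolynomial.rename Fin.succ (fk k))
      = ∑ k ∈ Finset.range (2*m+1), MvPolynomial.aeval g (fk k) := by
    intro g
    rw [map_sum]
    refine Finset.sum_congr rfl fun k hk => ?_
    rw [map_mul, map_pow, MvPolynomial.aeval_X, MvPolynomial.aeval_rename]
    simp only [Fin.cons_zero, one_pow, one_mul]
    have h2 : (Fin.cons (1 : Polynomial ℂ) g ∘ Fin.succ) = g := funext fun j => Fin.cons_succ _ _ _
    rw [h2]
  have ha : ∀ (y z' : Fin n → ℂ) (k : ℕ), a k y z'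
      = ∑ j ∈ Finset.range (2*m+1),
        (MvPolynomial.aeval
          (fun j' => Polynomial.C (y j') + Polynomial.C (z' j') * Polynomial.X)
          (fk j)).coeff k := by
    intro y z' k
    show (MvPolynomial.aeval (Fin.cons (1 : Polynomial ℂ)
        (fun j => Polynomial.C (y j) + Polynomial.C (z' j) * Polynomial.X))
        (∑ k ∈ Finset.range (2*m+1),
          MvPolynomial.X 0 ^ (2*m-k) * MvPolynomial.rename Fin.succ (fk k))).coeff k = _
    rw [hkey, Polynomial.finset_sum_coeff]
  have hval : ∀ (z' : Fin n → ℂ) (k : ℕ), k ≤ 2*m → a k 0 z' = MvPolynomial.eval z' (fk k) := by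
    intro z' k hk
    rw [ha]
    have hterm : ∀ j ∈ Finset.range (2*m+1),
        (MvPolynomial.aeval
          (fun j' => Polynomial.C ((0 : Fin n → ℂ) j') + Polynomial.C (z' j') * Polynomial.X)
          (fk j)).coeff k
        = if k = j then MvPolynomial.eval z' (fk j) else 0 := by
      intro j hj
      have hψ : (fun j' => Polynomial.C ((0 : Fin n → ℂ) j')
            + Polynomial.C (z' j') * Polynomial.X)
          = fun j' : Fin n => Polynomial.C (z' j') * Polynomial.X := by
        funext j'; simp
      rw [hψ, myHomogEval (hfk j (by have := Finset.mem_range.mp hj; omega)) z',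
        Polynomial.coeff_C_mul, Polynomial.coeff_X_pow, mul_ite, mul_one, mul_zero]
    rw [Finset.sum_congr rfl hterm, Finset.sum_ite_eq (Finset.range (2*m+1)) k,
      if_pos (Finset.mem_range.mpr (by omega))]
  constructor
  · intro z
    have h0 : a 0 0 z = 1 := by
      rw [hval z 0 (by omega), hf0]; simp
    have hm1 : a (m+1) 0 z = MvPolynomial.eval z (fk (m+1)) := hval z (m+1) (by omega)
    have hB : B 0 z = a (m+1) 0 z / a 0 0 z
        - MvPolynomial.eval (fun j : Fin m => a (j.1+1) 0 z / a 0 0 z) A := rfl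
    rw [hB, h0, hm1]
    have hfun : (fun j : Fin m => a (j.1+1) 0 z / (1:ℂ)) = (0 : Fin m → ℂ) := by
      funext j
      rw [hval z (j.1+1) (by have := j.isLt; omega),
        hfv (j.1+1) (by omega) (by have := j.isLt; omega)]
      simp
    rw [hfun, myEvalZeroWH hA (by omega), sub_zero, div_one]
  · intro i z
    set F : MvPolynomial (Fin n) ℂ := ∑ j ∈ Finset.range (2*m+1), fk j with hF
    set χ : Fin n → Polynomial (Polynomial ℂ) := fun j' =>
      Polynomial.C (Polynomial.C (z j') * Polynomial.X)
        + (if j' = i then Polynomial.X else 0) with hχ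
    set Q : Polynomial (Polynomial ℂ) := MvPolynomial.aeval χ F with hQ
    have hψeval : ∀ s : ℂ, (fun j' => Polynomial.eval (Polynomial.C s) (χ j'))
        = fun j' : Fin n => Polynomial.C ((Pi.single i s : Fin n → ℂ) j')
            + Polynomial.C (z j') * Polynomial.X := by
      intro s; funext j'
      rcases eq_or_ne j' i with rfl | hji
      · simp [hχ, Pi.single_eq_same, add_comm]
      · simp [hχ, hji, Pi.single_eq_of_ne hji, add_comm]
    have hrep : ∀ (k : ℕ) (s : ℂ),
        a k (Pi.single i s) z = (Q.eval (Polynomial.C s)).coeff k := by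
      intro k s
      rw [ha, hQ, myCommEval, hψeval s, hF, map_sum, Polynomial.finset_sum_coeff]
    have hval0 : ∀ k, k ≤ 2*m →
        a k (Pi.single i (0:ℂ)) z = MvPolynomial.eval z (fk k) := by
      intro k hk; rw [Pi.single_zero]; exact hval z k hk
    have hQ1 : ∀ k : ℕ, k + 1 ≤ 2*m → (Q.coeff 1).coeff k
        = MvPolynomial.eval z (MvPolynomial.pderiv i (fk (k+1))) := by
      intro k hk
      have hderχ : ∀ j', Polynomial.derivative (χ j') = if j' = i then 1 else 0 := by
        intro j'
        rcases eq_or_ne j' i with rfl | hji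
        · simp [hχ]
        · simp [hχ, hji]
      have hder : Polynomial.derivative Q = MvPolynomial.aeval χ (MvPolynomial.pderiv i F) := by
        rw [hQ, myChainRule]
        refine (Finset.sum_eq_single i (fun j' _ hj' => ?_)
          (fun h => absurd (Finset.mem_univ i) h)).trans ?_
        · rw [hderχ, if_neg hj', mul_zero]
        · rw [hderχ, if_pos rfl, mul_one]
      have h2 : Q.coeff 1 = (Polynomial.derivative Q).coeff 0 := by
        rw [Polynomial.coeff_derivative]; simp
      have hψ0 : (fun j' => Polynomial.eval 0 (χ j'))
          = fun j' : Fin n => Polynomial.C (z j') * Polynomial.X := by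
        funext j'
        rcases eq_or_ne j' i with rfl | hji
        · simp [hχ]
        · simp [hχ, hji]
      rw [h2, Polynomial.coeff_zero_eq_eval_zero, hder, myCommEval, hψ0, hF, map_sum,
        map_sum, Polynomial.finset_sum_coeff]
      have hterm : ∀ j ∈ Finset.range (2*m+1),
          (MvPolynomial.aeval (fun j' : Fin n => Polynomial.C (z j') * Polynomial.X)
            (MvPolynomial.pderiv i (fk j))).coeff k
          = if k = j - 1 then MvPolynomial.eval z (MvPolynomial.pderiv i (fk j)) else 0 := by
        intro j hj
        have hhom : (MvPolynomial.pderiv i (fk j)).IsHomogeneous (j-1) :=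
          myHomogPderiv (hfk j (by have := Finset.mem_range.mp hj; omega)) i
        rw [myHomogEval hhom z, Polynomial.coeff_C_mul, Polynomial.coeff_X_pow, mul_ite,
          mul_one, mul_zero]
      rw [Finset.sum_congr rfl hterm,
        Finset.sum_eq_single_of_mem (k+1) (Finset.mem_range.mpr (by omega))
          (fun j hj hne => ?_), if_pos (by omega)]
      rcases Nat.eq_zero_or_pos j with rfl | hjpos
      · simp [hf0]
      · rw [if_neg (by omega)]
    have hu : ∀ k : ℕ, HasDerivAt (fun s : ℂ => a k (Pi.single i s) z)
        ((Q.coeff 1).coeff k) 0 := by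
      intro k
      have heq : (fun s : ℂ => a k (Pi.single i s) z)
          = fun s : ℂ => (Q.eval (Polynomial.C s)).coeff k := funext fun s => hrep k s
      rw [heq]; exact myU Q k
    have h00 : a 0 (Pi.single i (0:ℂ)) z = 1 := by rw [hval0 0 (by omega), hf0]; simp
    have hd0 : (Q.coeff 1).coeff 0 = 0 := by
      rw [hQ1 0 (by omega), hfv 1 le_rfl (by omega)]; simp
    have hdm1 : (Q.coeff 1).coeff (m+1)
        = MvPolynomial.eval z (MvPolynomial.pderiv i (fk (m+2))) := hQ1 (m+1) (by omega)
    have hq1 : HasDerivAt (fun s : ℂ => a (m+1) (Pi.single i s) z / a 0 (Pi.single i s) z)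
        (MvPolynomial.eval z (MvPolynomial.pderiv i (fk (m+2)))) 0 := by
      have h := (hu (m+1)).fun_div (hu 0) (by rw [h00]; exact one_ne_zero)
      rw [h00, hd0, hdm1] at h
      simpa using h
    have hgj : ∀ j : Fin m, HasDerivAt
        (fun s : ℂ => a (j.1+1) (Pi.single i s) z / a 0 (Pi.single i s) z)
        (((Q.coeff 1).coeff (j.1+1) * a 0 (Pi.single i (0:ℂ)) z
          - a (j.1+1) (Pi.single i (0:ℂ)) z * (Q.coeff 1).coeff 0)
          / (a 0 (Pi.single i (0:ℂ)) z)^2) 0 := fun j =>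
      (hu (j.1+1)).div (hu 0) (by rw [h00]; exact one_ne_zero)
    have hpt : (fun j : Fin m =>
        a (j.1+1) (Pi.single i (0:ℂ)) z / a 0 (Pi.single i (0:ℂ)) z) = (0 : Fin m → ℂ) := by
      funext j
      rw [hval0 (j.1+1) (by have := j.isLt; omega),
        hfv (j.1+1) (by omega) (by have := j.isLt; omega), h00]
      simp
    have hAzero : HasDerivAt (fun s : ℂ => MvPolynomial.eval
        (fun j : Fin m => a (j.1+1) (Pi.single i s) z / a 0 (Pi.single i s) z) A) 0 0 := by
      have h := myHasDerivAt A
        (fun j s => a (j.1+1) (Pi.single i s) z / a 0 (Pi.single i s) z)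
        (fun j => ((Q.coeff 1).coeff (j.1+1) * a 0 (Pi.single i (0:ℂ)) z
          - a (j.1+1) (Pi.single i (0:ℂ)) z * (Q.coeff 1).coeff 0)
          / (a 0 (Pi.single i (0:ℂ)) z)^2)
        0 hgj
      convert h using 1
      symm
      refine Finset.sum_eq_zero fun j _ => ?_
      rw [hpt, myPderivEvalZero hA (fun j' => by have := j'.isLt; omega) j, zero_mul]
    have htot : HasDerivAt (fun s : ℂ => B (Pi.single i s) z)
        (MvPolynomial.eval z (MvPolynomial.pderiv i (fk (m+2)))) 0 := by
      have h := hq1.sub hAzero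
      rw [sub_zero] at h
      exact h
    exact htot.deriv
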